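/- Let B and C be pretriangulated categories such that B is idempotent complete and every triangle of B that is a direct summand (retract) of a distinguished triangle is itself distinguished. Let F ⊣ G be an adjunction in which both F : B ⥤ C and G : C ⥤ B are exact (triangulated) functors, and suppose the unit η : 𝟭_B ⟶ F ⋙ G admits a natural retraction σ : F ⋙ G ⟶ 𝟭_B with η ≫ σ = 𝟙. Then a triangle X → Y → Z → X⟦1⟧ in B is distinguished if and only if its image under F is a distinguished triangle in C; in other words, F reflects distinguished triangles. -/

import Mathlib

open CategoryTheory CategoryTheory.Limits CategoryTheory.Pretriangulated

universe v₁ v₂ u₁ u₂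

/-- Let `B`, `C` be pretriangulated, `B` idempotent complete and such that any retract (direct
summand) of a distinguished triangle is distinguished. If `F ⊣ G` is an adjunction of exact
(triangulated) functors whose unit admits a natural retraction, then a triangle in `B` is
distinguished iff its image under `F` is distinguished in `C`. -/
theorem distinguished_iff_map_distinguished_of_unit_split
    {B : Type u₁} [Category.{v₁} B] [HasZeroObject B] [HasShift B ℤ] [Preadditive B]
    [∀ n : ℤ, (shiftFunctor B n).Additive] [Pretriangulated B]
    {C : Type u₂} [Category.{v₂} C] [HasZeroObject C] [HasShift C ℤ] [Preadditive C]
    [∀ n : ℤ, (shiftFunctor C n).Additive] [Pretriangulated C]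
    [IsIdempotentComplete B]
    (hretract : ∀ (T T' : Triangle B) (i : T ⟶ T') (r : T' ⟶ T),
      i ≫ r = 𝟙 T → T' ∈ (distTriang B) → T ∈ distTriang B)
    (F : B ⥤ C) [F.CommShift ℤ] [F.IsTriangulated]
    (G : C ⥤ B) [G.CommShift ℤ] [G.IsTriangulated]
    (adj : F ⊣ G)
    (σ : F ⋙ G ⟶ 𝟭 B) (hσ : adj.unit ≫ σ = 𝟙 (𝟭 B)) :
    ∀ T : Triangle B, T ∈ (distTriang B) ↔ F.mapTriangle.obj T ∈ distTriang C := by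
  intro T
  constructor
  · intro hT
    exact F.map_distinguished T hT
  · intro hFT
    -- unit-retraction identity, componentwise
    have hus : ∀ (b : B), adj.unit.app b ≫ σ.app b = 𝟙 b := by
      intro b
      have := congr_arg (fun (τ : 𝟭 B ⟶ 𝟭 B) => τ.app b) hσ
      simpa using this
    have hunat : ∀ {a b : B} (f : a ⟶ b),
        f ≫ adj.unit.app b = adj.unit.app a ≫ G.map (F.map f) := by
      intro a b f
      exact adj.unit.naturality f
    have hσnat : ∀ {a b : B} (f : a ⟶ b),
        G.map (F.map f) ≫ σ.app b = σ.app a ≫ f := by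
      intro a b f
      simpa using σ.naturality f
    -- complete T.mor₁ to a distinguished triangle T₀
    obtain ⟨W, g₀, h₀, hT₀⟩ := distinguished_cocone_triangle T.mor₁
    have hFT₀ : F.mapTriangle.obj (Triangle.mk T.mor₁ g₀ h₀) ∈ distTriang C :=
      F.map_distinguished _ hT₀
    -- fill-ins in C
    obtain ⟨φ₃, hφ₂, hφ₃⟩ : ∃ φ₃ : F.obj T.obj₃ ⟶ F.obj W,
        F.map T.mor₂ ≫ φ₃ = 𝟙 (F.obj T.obj₂) ≫ F.map g₀ ∧
        (F.map T.mor₃ ≫ (F.commShiftIso (1 : ℤ)).hom.app T.obj₁) ≫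
          (shiftFunctor C (1 : ℤ)).map (𝟙 (F.obj T.obj₁)) =
          φ₃ ≫ F.map h₀ ≫ (F.commShiftIso (1 : ℤ)).hom.app T.obj₁ := complete_distinguished_triangle_morphism
      (F.mapTriangle.obj T) (F.mapTriangle.obj (Triangle.mk T.mor₁ g₀ h₀)) hFT hFT₀
      (𝟙 _) (𝟙 _) (by erw [Category.comp_id, Category.id_comp]; rfl)
    obtain ⟨ψ₃, hψ₂, hψ₃⟩ : ∃ ψ₃ : F.obj W ⟶ F.obj T.obj₃,
        F.map g₀ ≫ ψ₃ = 𝟙 (F.obj T.obj₂) ≫ F.map T.mor₂ ∧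
        (F.map h₀ ≫ (F.commShiftIso (1 : ℤ)).hom.app T.obj₁) ≫
          (shiftFunctor C (1 : ℤ)).map (𝟙 (F.obj T.obj₁)) =
          ψ₃ ≫ F.map T.mor₃ ≫ (F.commShiftIso (1 : ℤ)).hom.app T.obj₁ := complete_distinguished_triangle_morphism
      (F.mapTriangle.obj (Triangle.mk T.mor₁ g₀ h₀)) (F.mapTriangle.obj T) hFT₀ hFT
      (𝟙 _) (𝟙 _) (by erw [Category.comp_id, Category.id_comp]; rfl)
    simp only [Category.id_comp,
      CategoryTheory.Functor.map_id, Category.comp_id] at hφ₂ hφ₃ hψ₂ hψ₃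
    have hφ₃' : F.map T.mor₃ = φ₃ ≫ F.map h₀ := by
      rw [← cancel_mono ((F.commShiftIso (1 : ℤ)).hom.app T.obj₁)]
      simpa using hφ₃
    have hψ₃' : F.map h₀ = ψ₃ ≫ F.map T.mor₃ := by
      rw [← cancel_mono ((F.commShiftIso (1 : ℤ)).hom.app T.obj₁)]
      simpa using hψ₃
    -- transport the fill-ins to B
    obtain ⟨k, hk⟩ : ∃ k : T.obj₃ ⟶ W,
        k = adj.unit.app T.obj₃ ≫ G.map φ₃ ≫ σ.app W := ⟨_, rfl⟩
    obtain ⟨k', hk'⟩ : ∃ k' : W ⟶ T.obj₃,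
        k' = adj.unit.app W ≫ G.map ψ₃ ≫ σ.app T.obj₃ := ⟨_, rfl⟩
    have hk₂ : T.mor₂ ≫ k = g₀ := by
      rw [hk, ← Category.assoc, hunat T.mor₂, Category.assoc, ← Category.assoc (G.map _),
        ← G.map_comp, hφ₂, ← Category.assoc, ← hunat g₀, Category.assoc, hus, Category.comp_id]
    have hk₃ : k ≫ h₀ = T.mor₃ := by
      rw [hk]
      simp only [Category.assoc]
      rw [← hσnat h₀, ← Category.assoc (G.map φ₃), ← G.map_comp, ← hφ₃',
        ← Category.assoc, ← hunat T.mor₃, Category.assoc, hus, Category.comp_id]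
    have hk'₂ : g₀ ≫ k' = T.mor₂ := by
      rw [hk', ← Category.assoc, hunat g₀, Category.assoc, ← Category.assoc (G.map _),
        ← G.map_comp, hψ₂, ← Category.assoc, ← hunat T.mor₂, Category.assoc, hus,
        Category.comp_id]
    have hk'₃ : k' ≫ T.mor₃ = h₀ := by
      rw [hk']
      simp only [Category.assoc]
      rw [← hσnat T.mor₃, ← Category.assoc (G.map ψ₃), ← G.map_comp, ← hψ₃',
        ← Category.assoc, ← hunat h₀, Category.assoc, hus, Category.comp_id]
    -- w := k' ≫ k is an automorphism of W
    obtain ⟨w, hw⟩ : ∃ w : W ⟶ W, w = k' ≫ k := ⟨_, rfl⟩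
    have hw₂ : g₀ ≫ w = g₀ := by rw [hw, ← Category.assoc, hk'₂, hk₂]
    have hw₃ : w ≫ h₀ = h₀ := by rw [hw, Category.assoc, hk₃, hk'₃]
    have : IsIso w := by
      have := isIso₃_of_isIso₁₂
        ({ hom₁ := 𝟙 _, hom₂ := 𝟙 _, hom₃ := w,
           comm₁ := by erw [Category.comp_id, Category.id_comp]
           comm₂ := by erw [Category.id_comp]; exact hw₂
           comm₃ := by
            simp only [CategoryTheory.Functor.map_id]; erw [Category.comp_id]; exact hw₃.symm } :
          Triangle.mk T.mor₁ g₀ h₀ ⟶ Triangle.mk T.mor₁ g₀ h₀) hT₀ hT₀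
        inferInstance inferInstance
      exact this
    have hinv₂ : g₀ ≫ inv w = g₀ := (IsIso.comp_inv_eq w).2 hw₂.symm
    have hinv₃ : inv w ≫ h₀ = h₀ := (IsIso.inv_comp_eq w).2 hw₃.symm
    -- the idempotent e'
    obtain ⟨e', he'⟩ : ∃ e' : T.obj₃ ⟶ T.obj₃, e' = k ≫ inv w ≫ k' := ⟨_, rfl⟩
    have he'₂ : T.mor₂ ≫ e' = T.mor₂ := by
      rw [he', ← Category.assoc, hk₂, ← Category.assoc, hinv₂, hk'₂]
    have he'₃ : e' ≫ T.mor₃ = T.mor₃ := by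
      rw [he']
      simp only [Category.assoc]
      rw [hk'₃, hinv₃, hk₃]
    have he'idem : e' ≫ e' = e' := by
      rw [he']
      simp only [Category.assoc]
      rw [← Category.assoc k' k, ← hw, ← Category.assoc w (inv w), IsIso.hom_inv_id,
        Category.id_comp]
    obtain ⟨q, hq⟩ : ∃ q : T.obj₃ ⟶ T.obj₃, q = 𝟙 T.obj₃ - e' := ⟨_, rfl⟩
    have hq₃ : q ≫ T.mor₃ = 0 := by
      rw [hq, Preadditive.sub_comp, Category.id_comp, he'₃, sub_self]
    have hq₂ : T.mor₂ ≫ q = 0 := by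
      rw [hq, Preadditive.comp_sub, Category.comp_id, he'₂, sub_self]
    have hqq : q ≫ q = q := by
      rw [hq, Preadditive.sub_comp, Preadditive.comp_sub, Preadditive.comp_sub,
        Category.id_comp, Category.comp_id, Category.id_comp, he'idem]
      abel
    -- F.map q = 0
    have hFq3 : F.map q ≫ (F.mapTriangle.obj T).mor₃ = 0 := by
      show F.map q ≫ (F.map T.mor₃ ≫ (F.commShiftIso (1 : ℤ)).hom.app T.obj₁) = 0
      rw [← Category.assoc, ← F.map_comp, hq₃, F.map_zero, zero_comp]
    obtain ⟨u, hu⟩ : ∃ u : F.obj T.obj₃ ⟶ F.obj T.obj₂, F.map q = u ≫ F.map T.mor₂ :=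
      Triangle.coyoneda_exact₃ _ hFT (F.map q) hFq3
    have hFq : F.map q = 0 := by
      have h1 : F.map q = F.map q ≫ F.map q := by rw [← F.map_comp, hqq]
      rw [h1]
      nth_rewrite 1 [hu]
      rw [Category.assoc, ← F.map_comp, hq₂, F.map_zero, comp_zero]
    -- hence q = 0
    have hq0 : q = 0 := by
      have h2 : q = q ≫ (adj.unit.app T.obj₃ ≫ σ.app T.obj₃) := by
        rw [hus, Category.comp_id]
      rw [h2, ← Category.assoc, hunat q, hFq, G.map_zero, Category.assoc, zero_comp,
        comp_zero]
    have he'1 : e' = 𝟙 T.obj₃ := by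
      rw [hq, sub_eq_zero] at hq0
      exact hq0.symm
    -- conclude: T is a retract of the distinguished triangle T₀
    have hi₂ : T.mor₂ ≫ k ≫ inv w = g₀ := by
      rw [← Category.assoc, hk₂, hinv₂]
    have hi₃ : (k ≫ inv w) ≫ h₀ = T.mor₃ := by
      rw [Category.assoc, hinv₃, hk₃]
    refine hretract T (Triangle.mk T.mor₁ g₀ h₀)
      ({ hom₁ := 𝟙 _, hom₂ := 𝟙 _, hom₃ := (k ≫ inv w : T.obj₃ ⟶ W),
         comm₁ := by erw [Category.comp_id, Category.id_comp]; rfl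
         comm₂ := by erw [Category.id_comp]; exact hi₂
         comm₃ := by erw [CategoryTheory.Functor.map_id, Category.comp_id]; exact hi₃.symm })
      ({ hom₁ := 𝟙 _, hom₂ := 𝟙 _, hom₃ := k',
         comm₁ := by erw [Category.comp_id, Category.id_comp]; rfl
         comm₂ := by erw [Category.id_comp]; exact hk'₂
         comm₃ := by erw [CategoryTheory.Functor.map_id, Category.comp_id]; exact hk'₃.symm }) ?_ hT₀
    ext
    · exact Category.comp_id _
    · exact Category.comp_id _
    · have : (k ≫ inv w) ≫ k' = 𝟙 T.obj₃ := by
        rw [Category.assoc, ← he', he'1]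
      exact this
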